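/- Let p₁, p₃, p ∈ ℝ² with p not on the line L through p₁ and p₃ and p₁ ≠ p₃. Let q be the orthogonal projection of p onto L, let v = ‖p - q‖ and r = ‖p - p₁‖. Define p₃' = p + r·(q - p)/v. Let q' be the orthogonal projection of p onto the line through p₁ and p₃', and v' = ‖p - q'‖. Then v'²/r² = 1/2 + v/(2r). -/
import Mathlib


open scoped RealInnerProductSpace

theorem stmt_10 (p₁ p₃ p q q' p₃' : EuclideanSpace ℝ (Fin 2)) (v r v' : ℝ)
    (h₁₃ : p₁ ≠ p₃)
    (hp : p ∉ affineSpan ℝ ({p₁, p₃} : Set (EuclideanSpace ℝ (Fin 2))))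
    (hq_mem : q ∈ affineSpan ℝ ({p₁, p₃} : Set (EuclideanSpace ℝ (Fin 2))))
    (hq_perp : ⟪p - q, p₃ - p₁⟫ = 0)
    (hv : v = ‖p - q‖) (hr : r = ‖p - p₁‖)
    (hp₃' : p₃' = p + (r / v) • (q - p))
    (hq'_mem : q' ∈ affineSpan ℝ ({p₁, p₃'} : Set (EuclideanSpace ℝ (Fin 2))))
    (hq'_perp : ⟪p - q', p₃' - p₁⟫ = 0)
    (hv' : v' = ‖p - q'‖) :
    v' ^ 2 / r ^ 2 = 1 / 2 + v / (2 * r) := by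
  have hpne₁ : p ≠ p₁ := fun h => hp (h ▸ left_mem_affineSpan_pair ℝ p₁ p₃)
  have hpneq : p ≠ q := fun h => hp (h ▸ hq_mem)
  have hr0 : 0 < r := by
    rw [hr, norm_pos_iff, sub_ne_zero]; exact hpne₁
  have hv0 : 0 < v := by
    rw [hv, norm_pos_iff, sub_ne_zero]; exact hpneq
  -- extract parametrization of q
  obtain ⟨t, ht⟩ : ∃ t : ℝ, t • (p₃ - p₁) = q - p₁ := by
    have hq' : (q - p₁) +ᵥ p₁ ∈ line[ℝ, p₁, p₃] := by
      simpa using hq_mem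
    exact vadd_left_mem_affineSpan_pair.mp hq'
  have hqp₁ : ⟪p - q, q - p₁⟫ = 0 := by
    rw [← ht, real_inner_smul_right, hq_perp, mul_zero]
  have hA : ⟪p - p₁, p - p₁⟫ = r ^ 2 := by
    rw [real_inner_self_eq_norm_sq, hr]
  have hW : ⟪q - p, q - p⟫ = v ^ 2 := by
    rw [real_inner_self_eq_norm_sq, hv, ← norm_neg]
    congr 1; abel
  have hX : ⟪p - p₁, q - p⟫ = -v ^ 2 := by
    have h1 : p - p₁ = (p - q) + (q - p₁) := by abel
    have h2 : ⟪q - p₁, q - p⟫ = 0 := by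
      rw [real_inner_comm]
      have : ⟪q - p, q - p₁⟫ = -⟪p - q, q - p₁⟫ := by
        rw [← inner_neg_left]; congr 1; abel
      rw [this, hqp₁, neg_zero]
    have h3 : ⟪p - q, q - p⟫ = -⟪q - p, q - p⟫ := by
      rw [← inner_neg_left]; congr 1; abel
    rw [h1, inner_add_left, h2, h3, hW, add_zero]
  by_cases hqeq : q = p₁
  · -- degenerate case: q = p₁, so v = r and p₃' = p₁
    have hvr : v = r := by rw [hv, hr, hqeq]
    have hp₃'eq : p₃' = p₁ := by
      rw [hp₃', hqeq, hvr, div_self hr0.ne', one_smul]; abel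
    have hq'eq : q' = p₁ := by
      rw [hp₃'eq] at hq'_mem
      simpa using hq'_mem
    have hv'r : v' = r := by rw [hv', hq'eq, hr]
    rw [hv'r, hvr]
    field_simp
    ring
  · -- main case
    have hqp₁0 : (0:ℝ) < ‖q - p₁‖ := by
      rw [norm_pos_iff, sub_ne_zero]; exact hqeq
    have hPyth : r ^ 2 = v ^ 2 + ‖q - p₁‖ ^ 2 := by
      have h1 : p - p₁ = (p - q) + (q - p₁) := by abel
      have := norm_add_sq_real (p - q) (q - p₁)
      rw [hqp₁] at this
      rw [hr, h1, this, hv]; ring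
    have hrv : v < r := by nlinarith
    -- d := p₃' - p₁ = (p - p₁) + (r/v) • (q - p)
    have hd : p₃' - p₁ = (p - p₁) + (r / v) • (q - p) := by
      rw [hp₃']; abel
    have he : ⟪p - p₁, p₃' - p₁⟫ = r ^ 2 - r * v := by
      rw [hd, inner_add_right, real_inner_smul_right, hA, hX]
      field_simp
      ring
    have hX' : ⟪q - p, p - p₁⟫ = -v ^ 2 := by rw [real_inner_comm]; exact hX
    have hDd : ⟪p₃' - p₁, p₃' - p₁⟫ = 2 * r ^ 2 - 2 * r * v := by
      rw [hd]
      simp only [inner_add_left, inner_add_right, real_inner_smul_left,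
        real_inner_smul_right, hA, hX, hX', hW]
      field_simp
      ring
    obtain ⟨s, hs⟩ : ∃ s : ℝ, s • (p₃' - p₁) = q' - p₁ := by
      have hq'' : (q' - p₁) +ᵥ p₁ ∈ line[ℝ, p₁, p₃'] := by
        simpa using hq'_mem
      exact vadd_left_mem_affineSpan_pair.mp hq''
    have hpq' : p - q' = (p - p₁) - s • (p₃' - p₁) := by
      rw [hs]; abel
    have hperp : r ^ 2 - r * v - s * (2 * r ^ 2 - 2 * r * v) = 0 := by
      have := hq'_perp
      rw [hpq', inner_sub_left, real_inner_smul_left, he, hDd] at this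
      linarith
    have hs2 : s = 1 / 2 := by
      have hpos : (0:ℝ) < r ^ 2 - r * v := by nlinarith
      have hz : (2 * s - 1) * (r ^ 2 - r * v) = 0 := by linear_combination -hperp
      rcases mul_eq_zero.mp hz with h | h
      · linarith
      · linarith
    have hcomm : ⟪p₃' - p₁, p - p₁⟫ = r ^ 2 - r * v := by
      rw [real_inner_comm]; exact he
    have key : ∀ (a d : EuclideanSpace ℝ (Fin 2)) (c : ℝ),
        ⟪a - c • d, a - c • d⟫ = ⟪a, a⟫ - 2 * c * ⟪a, d⟫ + c ^ 2 * ⟪d, d⟫ := by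
      intro a d c
      simp only [inner_sub_left, inner_sub_right, real_inner_smul_left,
        real_inner_smul_right, real_inner_comm d a]
      ring
    have hv'sq : v' ^ 2 = r ^ 2 - r * (r - v) / 2 := by
      rw [hv', ← real_inner_self_eq_norm_sq, hpq', key, hA, he, hDd, hs2]
      ring
    rw [hv'sq]
    field_simp
    ring
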